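/- arXiv:1812.05844 — 2 statements merged into one kernel-verified Lean document; each statement's English description precedes it below -/
import Mathlib

section
/- Let ε > 0 and let p₁, ..., p_m be the first m odd primes with Q = p₁⋯p_m. Define S(Q) as the set of pairs (a, q) of positive integers with Q < q ≤ 2Q, 1 ≤ a ≤ q², gcd(a, q) = 1, and |a/q² − 1/Q| ≤ 1/Q³. Then for all sufficiently large m, the cardinality of S(Q) is at least Q^{(log 2)/((1+ε) log log Q)}. -/
open scoped Classical


/-- The `i`-th odd prime (0-indexed): `nthOddPrime 0 = 3`, etc. -/
noncomputable def nthOddPrime (i : ℕ) : ℕ := Nat.nth (fun p => p.Prime ∧ p ≠ 2) i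

lemma oddPrime_infinite : {p : ℕ | p.Prime ∧ p ≠ 2}.Infinite := by
  have h : {p : ℕ | p.Prime ∧ p ≠ 2} = {p | p.Prime} \ {2} := by
    ext p; simp [Set.mem_diff]
  rw [h]
  exact Nat.infinite_setOf_prime.diff (Set.finite_singleton 2)

lemma nthOddPrime_prime (i : ℕ) : (nthOddPrime i).Prime :=
  (Nat.nth_mem_of_infinite oddPrime_infinite i).1

lemma nthOddPrime_ne_two (i : ℕ) : nthOddPrime i ≠ 2 :=
  (Nat.nth_mem_of_infinite oddPrime_infinite i).2

lemma three_le_nthOddPrime (i : ℕ) : 3 ≤ nthOddPrime i := by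
  have h1 := (nthOddPrime_prime i).two_le
  have h2 := nthOddPrime_ne_two i
  omega

lemma nthOddPrime_strictMono : StrictMono nthOddPrime :=
  Nat.nth_strictMono oddPrime_infinite

lemma add_three_le_nthOddPrime (i : ℕ) : i + 3 ≤ nthOddPrime i := by
  induction i with
  | zero => simpa using three_le_nthOddPrime 0
  | succ n ih =>
    have h : nthOddPrime n < nthOddPrime (n + 1) := nthOddPrime_strictMono (by omega)
    omega

/-- The number of square roots of 1 mod n. -/
noncomputable def sqc (n : ℕ) : ℕ := Nat.card {x : ZMod n // x ^ 2 = 1}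

lemma sqc_eq_card (n : ℕ) [NeZero n] :
    sqc n = (Finset.univ.filter (fun x : ZMod n => x ^ 2 = 1)).card := by
  rw [sqc, Nat.card_eq_fintype_card, Fintype.card_subtype]

lemma sqc_prime {p : ℕ} (hp : p.Prime) (hp2 : p ≠ 2) : sqc p = 2 := by
  haveI : Fact p.Prime := ⟨hp⟩
  haveI : Fact (2 < p) := ⟨by have := hp.two_le; omega⟩
  rw [sqc_eq_card]
  have h : (Finset.univ.filter (fun x : ZMod p => x ^ 2 = 1)) = {1, -1} := by
    ext x
    simp [sq_eq_one_iff]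
  rw [h]
  exact Finset.card_pair (fun h => ZMod.neg_one_ne_one h.symm)

lemma sqc_mul {a b : ℕ} (h : a.Coprime b) : sqc (a * b) = sqc a * sqc b := by
  rw [sqc, sqc, sqc, ← Nat.card_prod]
  apply Nat.card_congr
  refine Equiv.trans (Equiv.trans
    ((ZMod.chineseRemainder h).toEquiv.subtypeEquiv (q := fun y : ZMod a × ZMod b => y ^ 2 = 1) ?_)
    (Equiv.subtypeEquivRight (q := fun y : ZMod a × ZMod b => y.1 ^ 2 = 1 ∧ y.2 ^ 2 = 1) ?_))
    (Equiv.subtypeProdEquivProd (p := fun x : ZMod a => x ^ 2 = 1) (q := fun x : ZMod b => x ^ 2 = 1))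
  · intro x
    constructor
    · intro hx
      show (ZMod.chineseRemainder h) x ^ 2 = 1
      rw [← map_pow, hx, map_one]
    · intro hx
      have : (ZMod.chineseRemainder h) (x ^ 2) = (ZMod.chineseRemainder h) 1 := by
        rw [map_pow, map_one]; exact hx
      exact (ZMod.chineseRemainder h).injective this
  · intro y
    constructor
    · intro hy
      exact ⟨congrArg Prod.fst hy, congrArg Prod.snd hy⟩
    · intro ⟨h1, h2⟩
      ext
      · simpa using h1
      · simpa using h2

lemma sqc_Q (m : ℕ) : sqc (∏ i ∈ Finset.range m, nthOddPrime i) = 2 ^ m := by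
  induction m with
  | zero =>
    simp only [Finset.range_zero, Finset.prod_empty, pow_zero]
    rw [sqc]
    haveI : Unique {x : ZMod 1 // x ^ 2 = 1} :=
      ⟨⟨⟨0, Subsingleton.elim _ _⟩⟩, fun a => Subtype.ext (Subsingleton.elim _ _)⟩
    exact Nat.card_unique
  | succ n ih =>
    rw [Finset.prod_range_succ]
    have hco : (∏ i ∈ Finset.range n, nthOddPrime i).Coprime (nthOddPrime n) := by
      apply Nat.Coprime.prod_left
      intro i hi
      rw [Nat.coprime_primes (nthOddPrime_prime i) (nthOddPrime_prime n)]
      intro hEq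
      have := nthOddPrime_strictMono.injective hEq
      simp only [Finset.mem_range] at hi
      omega
    rw [sqc_mul hco, ih, sqc_prime (nthOddPrime_prime n) (nthOddPrime_ne_two n), pow_succ]

lemma two_pow_le_card (m Q : ℕ) [NeZero Q] (hm : 1 ≤ m)
    (hQ : Q = ∏ i ∈ Finset.range m, nthOddPrime i) (hQ3 : 3 ≤ Q) :
    (Finset.univ.filter (fun x : ZMod Q => x ^ 2 = 1)).card ≤
      (((Finset.Icc 1 ((2 * Q) ^ 2)) ×ˢ (Finset.Ioc Q (2 * Q))).filter
          (fun p : ℕ × ℕ => p.1 ≤ p.2 ^ 2 ∧ Nat.gcd p.1 p.2 = 1 ∧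
            |(p.1 : ℝ) / (p.2 : ℝ) ^ 2 - 1 / (Q : ℝ)| ≤ 1 / (Q : ℝ) ^ 3)).card := by
  haveI : NeZero Q := ⟨by omega⟩
  haveI : Fact (1 < Q) := ⟨by omega⟩
  apply Finset.card_le_card_of_injOn (fun x => (((x.val + Q) ^ 2 - 1) / Q, x.val + Q))
  · intro x hx
    simp only [Finset.mem_coe, Finset.mem_filter, Finset.mem_univ, true_and] at hx
    set r := x.val with hr
    have hrlt : r < Q := ZMod.val_lt x
    have hx0 : x ≠ 0 := by
      rintro rfl
      rw [zero_pow (by norm_num)] at hx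
      exact zero_ne_one hx
    have hr1 : 1 ≤ r := by
      rcases Nat.eq_zero_or_pos r with h | h
      · exact absurd ((ZMod.val_eq_zero x).1 h) hx0
      · exact h
    set q := r + Q with hqdef
    have hq1 : Q < q := by omega
    have hq2 : q ≤ 2 * Q := by omega
    have hq2pos : 1 ≤ q ^ 2 := Nat.one_le_pow _ _ (by omega)
    have hdvd : Q ∣ q ^ 2 - 1 := by
      have hcast : ((q ^ 2 - 1 : ℕ) : ZMod Q) = 0 := by
        have h1 : ((q ^ 2 - 1 : ℕ) : ZMod Q) = ((q : ℕ) : ZMod Q) ^ 2 - 1 := by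
          push_cast [Nat.cast_sub hq2pos]
          ring
        have h2 : ((q : ℕ) : ZMod Q) = x := by
          rw [hqdef]
          push_cast [ZMod.natCast_self]
          rw [add_zero]
          exact ZMod.natCast_rightInverse x
        rw [h1, h2, hx, sub_self]
      exact (ZMod.natCast_eq_zero_iff _ _).1 hcast
    set a := (q ^ 2 - 1) / Q with hadef
    have haQ : a * Q = q ^ 2 - 1 := Nat.div_mul_cancel hdvd
    have ha1 : 1 ≤ a := by
      rcases Nat.eq_zero_or_pos a with h | h
      · exfalso
        rw [h, zero_mul] at haQ
        have : q ^ 2 ≤ 1 := by omega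
        have : q ≤ q ^ 2 := Nat.le_self_pow (by norm_num) q
        omega
      · exact h
    have haq2 : a ≤ q ^ 2 := le_trans (Nat.div_le_self _ _) (by omega)
    have hgcd : Nat.gcd a q = 1 := by
      have hd1 : Nat.gcd a q ∣ q ^ 2 := dvd_pow (Nat.gcd_dvd_right a q) (by norm_num)
      have hd2 : Nat.gcd a q ∣ q ^ 2 - 1 := haQ ▸ Dvd.dvd.mul_right (Nat.gcd_dvd_left a q) Q
      have hd3 : Nat.gcd a q ∣ q ^ 2 - (q ^ 2 - 1) := Nat.dvd_sub hd1 hd2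
      have : q ^ 2 - (q ^ 2 - 1) = 1 := by omega
      rw [this] at hd3
      exact Nat.dvd_one.1 hd3
    simp only [Finset.mem_coe, Finset.mem_filter, Finset.mem_product, Finset.mem_Icc, Finset.mem_Ioc]
    have hQR : (0 : ℝ) < Q := by positivity
    have hqR : (0 : ℝ) < (q : ℝ) := by positivity
    refine ⟨⟨⟨ha1, ?_⟩, hq1, hq2⟩, haq2, hgcd, ?_⟩
    · calc a ≤ q ^ 2 := haq2
        _ ≤ (2 * Q) ^ 2 := Nat.pow_le_pow_left hq2 2
    · have hacast : (a : ℝ) * (Q : ℝ) = (q : ℝ) ^ 2 - 1 := by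
        have := congrArg (Nat.cast : ℕ → ℝ) haQ
        push_cast [Nat.cast_sub hq2pos] at this
        linarith
      have hkey : (a : ℝ) / (q : ℝ) ^ 2 - 1 / (Q : ℝ) = -(1 / ((q : ℝ) ^ 2 * Q)) := by
        field_simp
        nlinarith [hacast]
      rw [hkey, abs_neg, abs_of_pos (by positivity)]
      rw [div_le_div_iff₀ (by positivity) (by positivity)]
      have hQq : (Q : ℝ) ≤ (q : ℝ) := by exact_mod_cast hq1.le
      have hsq : (Q : ℝ) ^ 2 ≤ (q : ℝ) ^ 2 := pow_le_pow_left₀ hQR.le hQq 2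
      nlinarith [hsq]
  · intro x hx y hy hEq
    have : x.val + Q = y.val + Q := congrArg Prod.snd hEq
    exact ZMod.val_injective Q (by omega)

lemma cheb (n : ℕ) (hn : 1 ≤ n) :
    4 ^ n ≤ (2 * n) ^ (Nat.count Nat.Prime (2 * n + 1) + 1) := by
  have h1 := Nat.four_pow_le_two_mul_self_mul_centralBinom n hn
  have hcb : Nat.centralBinom n ≠ 0 := Nat.centralBinom_ne_zero n
  have h2 : Nat.centralBinom n ≤ (2 * n) ^ (Nat.count Nat.Prime (2 * n + 1)) := by
    conv_lhs => rw [← Nat.factorization_prod_pow_eq_self hcb]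
    rw [Finsupp.prod, Nat.support_factorization]
    have hsub : (Nat.centralBinom n).primeFactors ⊆
        (Finset.range (2 * n + 1)).filter Nat.Prime := by
      intro p hp
      rw [Nat.mem_primeFactors] at hp
      obtain ⟨hpp, hpd, -⟩ := hp
      have hfac : 1 ≤ (Nat.centralBinom n).factorization p :=
        (Nat.Prime.factorization_pos_of_dvd hpp hcb hpd)
      have hple : p ≤ 2 * n := by
        calc p = p ^ 1 := (pow_one p).symm
          _ ≤ p ^ ((Nat.centralBinom n).factorization p) :=
            Nat.pow_le_pow_right hpp.pos hfac
          _ ≤ 2 * n := by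
            rw [Nat.centralBinom] at *
            exact Nat.pow_factorization_choose_le (by omega)
      simp only [Finset.mem_filter, Finset.mem_range]
      exact ⟨by omega, hpp⟩
    calc (∏ p ∈ (Nat.centralBinom n).primeFactors, p ^ (Nat.centralBinom n).factorization p)
        ≤ (2 * n) ^ (Nat.centralBinom n).primeFactors.card := by
          apply Finset.prod_le_pow_card
          intro p hp
          rw [Nat.mem_primeFactors] at hp
          rw [Nat.centralBinom] at *
          exact Nat.pow_factorization_choose_le (by omega)
      _ ≤ (2 * n) ^ (Nat.count Nat.Prime (2 * n + 1)) := by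
          apply Nat.pow_le_pow_right (by omega)
          rw [Nat.count_eq_card_filter_range]
          exact Finset.card_le_card hsub
  calc 4 ^ n ≤ 2 * n * Nat.centralBinom n := h1
    _ ≤ 2 * n * (2 * n) ^ (Nat.count Nat.Prime (2 * n + 1)) := Nat.mul_le_mul_left _ h2
    _ = (2 * n) ^ (Nat.count Nat.Prime (2 * n + 1) + 1) := by ring

lemma count_prime_le_count_oddPrime (N : ℕ) :
    Nat.count Nat.Prime N ≤ Nat.count (fun p => p.Prime ∧ p ≠ 2) N + 1 := by
  rw [Nat.count_eq_card_filter_range, Nat.count_eq_card_filter_range]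
  have hsub : (Finset.range N).filter Nat.Prime ⊆
      insert 2 ((Finset.range N).filter (fun p => p.Prime ∧ p ≠ 2)) := by
    intro p hp
    simp only [Finset.mem_filter, Finset.mem_range] at hp
    rcases eq_or_ne p 2 with rfl | hne
    · exact Finset.mem_insert_self _ _
    · exact Finset.mem_insert_of_mem (by simp [Finset.mem_filter, hp.1, hp.2, hne])
  calc ((Finset.range N).filter Nat.Prime).card
      ≤ (insert 2 ((Finset.range N).filter (fun p => p.Prime ∧ p ≠ 2))).card :=
        Finset.card_le_card hsub
    _ ≤ ((Finset.range N).filter (fun p => p.Prime ∧ p ≠ 2)).card + 1 := Finset.card_insert_le _ _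

lemma nthOddPrime_le_of_log (m n : ℕ) (hn : 1 ≤ n) (hm : 1 ≤ m)
    (h : ((m : ℝ) + 2) * Real.log (2 * n) ≤ 2 * n * Real.log 2) :
    nthOddPrime (m - 1) ≤ 2 * n := by
  set c := Nat.count Nat.Prime (2 * n + 1) with hc
  have hcR : ((4 : ℕ) : ℝ) ^ n ≤ ((2 * n : ℕ) : ℝ) ^ (c + 1) := by
    exact_mod_cast cheb n hn
  have h2n1 : (1 : ℝ) < ((2 * n : ℕ) : ℝ) := by
    have : 2 ≤ 2 * n := by omega
    exact_mod_cast this.trans_lt' (by norm_num)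
  have hlog := Real.log_le_log (by positivity) hcR
  rw [Real.log_pow, Real.log_pow] at hlog
  have hlog4 : Real.log ((4 : ℕ) : ℝ) = 2 * Real.log 2 := by
    rw [show ((4 : ℕ) : ℝ) = 2 ^ 2 by norm_num, Real.log_pow]
    push_cast; ring
  have hpos : 0 < Real.log ((2 * n : ℕ) : ℝ) := Real.log_pos h2n1
  have hmain : ((m : ℝ) + 2) * Real.log ((2 * n : ℕ) : ℝ) ≤
      ((c : ℝ) + 1) * Real.log ((2 * n : ℕ) : ℝ) := by
    have heq : (2 * (n : ℝ)) = ((2 * n : ℕ) : ℝ) := by push_cast; ring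
    calc ((m : ℝ) + 2) * Real.log ((2 * n : ℕ) : ℝ)
        ≤ 2 * n * Real.log 2 := by rw [← heq]; exact h
      _ = (n : ℝ) * Real.log ((4 : ℕ) : ℝ) := by rw [hlog4]; ring
      _ ≤ ((c : ℝ) + 1) * Real.log ((2 * n : ℕ) : ℝ) := by
          convert hlog using 2 <;> push_cast <;> ring
  have hmc : (m : ℝ) + 2 ≤ (c : ℝ) + 1 := le_of_mul_le_mul_right hmain hpos
  have hmcn : m + 1 ≤ c := by
    have h' : (m : ℝ) + 1 ≤ (c : ℝ) := by linarith
    exact_mod_cast h'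
  have hcount : m - 1 < Nat.count (fun p => p.Prime ∧ p ≠ 2) (2 * n + 1) := by
    have := count_prime_le_count_oddPrime (2 * n + 1)
    omega
  have h2 := Nat.nth_lt_of_lt_count hcount
  rw [nthOddPrime]
  omega


lemma sqrt_y_facts {y : ℝ} (h25 : 25 ≤ y) : Real.log y ≤ 0.4 * y := by
  have hy0 : (0 : ℝ) < y := by linarith
  have hs5 : 5 ≤ Real.sqrt y := by
    have : Real.sqrt 25 ≤ Real.sqrt y := Real.sqrt_le_sqrt h25
    rwa [show (25 : ℝ) = 5 ^ 2 by norm_num, Real.sqrt_sq (by norm_num)] at this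
  have hsq : Real.sqrt y ^ 2 = y := Real.sq_sqrt hy0.le
  have hlog : Real.log y = 2 * Real.log (Real.sqrt y) := by
    rw [← hsq, Real.log_pow]
    norm_num
  have hle : Real.log (Real.sqrt y) ≤ Real.sqrt y - 1 :=
    Real.log_le_sub_one_of_pos (by positivity)
  nlinarith [hsq, hs5, hle]

lemma logL_le {m : ℕ} (h6 : 6 ≤ m) (h25 : 25 ≤ Real.log m) :
    Real.log (Nat.log 2 m + 1 : ℕ) ≤ Real.log 2 + Real.log (Real.log m) ∧
    Real.log m ≤ ((Nat.log 2 m + 1 : ℕ) : ℝ) * Real.log 2 := by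
  set y := Real.log m with hy
  have hm0 : (0 : ℝ) < (m : ℝ) := by positivity
  have hl2 : (0.6931471803 : ℝ) < Real.log 2 := Real.log_two_gt_d9
  have hl2' : Real.log 2 < 0.6931471808 := Real.log_two_lt_d9
  constructor
  · -- L ≤ 2y, so log L ≤ log(2y) = log 2 + log y
    have hL2y : ((Nat.log 2 m + 1 : ℕ) : ℝ) ≤ 2 * y := by
      have hpow : (2 : ℕ) ^ (Nat.log 2 m) ≤ m := Nat.pow_log_le_self 2 (by omega)
      have hpowR : ((2 : ℝ)) ^ (Nat.log 2 m) ≤ (m : ℝ) := by exact_mod_cast hpow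
      have hlogpow : (Nat.log 2 m : ℝ) * Real.log 2 ≤ y := by
        calc (Nat.log 2 m : ℝ) * Real.log 2 = Real.log ((2 : ℝ) ^ (Nat.log 2 m)) := by
              rw [Real.log_pow]
          _ ≤ y := Real.log_le_log (by positivity) hpowR
      have : (Nat.log 2 m : ℝ) ≤ y / Real.log 2 := by
        rw [le_div_iff₀ (by linarith)]; linarith
      have hyd : y / Real.log 2 ≤ 1.5 * y := by
        rw [div_le_iff₀ (by linarith)]
        nlinarith
      push_cast
      nlinarith
    calc Real.log ((Nat.log 2 m + 1 : ℕ) : ℝ) ≤ Real.log (2 * y) := by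
          apply Real.log_le_log (by positivity) hL2y
      _ = Real.log 2 + Real.log y := Real.log_mul (by norm_num) (by linarith)
  · -- y ≤ L log 2
    have hpow : m < (2 : ℕ) ^ (Nat.log 2 m + 1) := Nat.lt_pow_succ_log_self (by norm_num) m
    have hpowR : (m : ℝ) ≤ ((2 : ℝ)) ^ (Nat.log 2 m + 1) := by
      have : (m : ℝ) < ((2 : ℕ) ^ (Nat.log 2 m + 1) : ℕ) := by exact_mod_cast hpow
      push_cast at this
      linarith
    calc y ≤ Real.log ((2 : ℝ) ^ (Nat.log 2 m + 1)) := Real.log_le_log hm0 hpowR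
      _ = ((Nat.log 2 m + 1 : ℕ) : ℝ) * Real.log 2 := by rw [Real.log_pow]

lemma E1_numeric {m : ℕ} (h6 : 6 ≤ m) (h25 : 25 ≤ Real.log m) :
    ((m : ℝ) + 2) * Real.log (2 * ((m * (Nat.log 2 m + 1) : ℕ) : ℝ)) ≤
      2 * ((m * (Nat.log 2 m + 1) : ℕ) : ℝ) * Real.log 2 := by
  obtain ⟨hA, hB⟩ := logL_le h6 h25
  set y := Real.log m with hy
  set L := Nat.log 2 m + 1 with hL
  have hm0 : (0 : ℝ) < (m : ℝ) := by positivity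
  have hL0 : (0 : ℝ) < ((L : ℕ) : ℝ) := by positivity
  have hsplit : Real.log (2 * ((m * L : ℕ) : ℝ)) = Real.log 2 + y + Real.log ((L : ℕ) : ℝ) := by
    rw [Nat.cast_mul]
    rw [show (2 : ℝ) * ((m : ℝ) * ((L : ℕ) : ℝ)) = 2 * (m : ℝ) * ((L : ℕ) : ℝ) by ring]
    rw [Real.log_mul (by positivity) (by positivity), Real.log_mul (by positivity) (by positivity)]
  have hLL : Real.log y ≤ 0.4 * y := sqrt_y_facts h25
  have hl2 : (0.6931471803 : ℝ) < Real.log 2 := Real.log_two_gt_d9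
  have hl2' : Real.log 2 < 0.6931471808 := Real.log_two_lt_d9
  have hm6 : (6 : ℝ) ≤ (m : ℝ) := by exact_mod_cast h6
  have hRHS : 2 * (m : ℝ) * y ≤ 2 * ((m * L : ℕ) : ℝ) * Real.log 2 := by
    rw [Nat.cast_mul]
    nlinarith [mul_le_mul_of_nonneg_left hB hm0.le]
  rw [hsplit]
  have hlogL : Real.log (L : ℝ) ≤ Real.log 2 + Real.log y := hA
  nlinarith [hLL, hlogL, hm6, h25, hl2, hl2']

lemma E2_numeric {ε : ℝ} (hε : 0 < ε) {m : ℕ} (h6 : 6 ≤ m) (h25 : 25 ≤ Real.log m)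
    (hH3 : 2 * Real.log 2 + (1 + ε) * (Real.log 3 + Real.log 2) ≤ ε * Real.log m) :
    Real.log (2 * ((m * (Nat.log 2 m + 1) : ℕ) : ℝ)) ≤
      (1 + ε) * (Real.log ((m / 2 : ℕ) : ℝ) + Real.log (Real.log ((m / 2 : ℕ) : ℝ))) := by
  obtain ⟨hA, hB⟩ := logL_le h6 h25
  set y := Real.log m with hy
  set L := Nat.log 2 m + 1 with hLdef
  set k := m / 2 with hkdef
  have hm0 : (0 : ℝ) < (m : ℝ) := by positivity
  have h2k : m ≤ 2 * k + 1 := by omega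
  have hk3 : 3 ≤ k := by omega
  have hkR : (m : ℝ) / 3 ≤ (k : ℝ) := by
    have h1 : (m : ℝ) ≤ 2 * (k : ℝ) + 1 := by exact_mod_cast h2k
    have h2 : (6 : ℝ) ≤ (m : ℝ) := by exact_mod_cast h6
    linarith
  have hk0 : (0 : ℝ) < (k : ℝ) := by
    have : (1 : ℝ) ≤ (k : ℝ) := by exact_mod_cast (by omega : 1 ≤ k)
    linarith
  have hlogk : y - Real.log 3 ≤ Real.log (k : ℝ) := by
    have h := Real.log_le_log (show (0:ℝ) < (m:ℝ)/3 by positivity) hkR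
    rwa [Real.log_div hm0.ne' (by norm_num)] at h
  have hlog3 : Real.log 3 ≤ 1.39 := by
    have h4 : Real.log 3 ≤ Real.log 4 := Real.log_le_log (by norm_num) (by norm_num)
    have : Real.log 4 = 2 * Real.log 2 := by
      rw [show (4:ℝ) = 2^2 by norm_num, Real.log_pow]; push_cast; ring
    have hl2' : Real.log 2 < 0.6931471808 := Real.log_two_lt_d9
    linarith
  have hy2logk : y / 2 ≤ Real.log (k : ℝ) := by linarith
  have hloglogk : Real.log y - Real.log 2 ≤ Real.log (Real.log (k : ℝ)) := by
    have h := Real.log_le_log (show (0:ℝ) < y/2 by linarith) hy2logk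
    rwa [Real.log_div (by linarith) (by norm_num)] at h
  have hLL : Real.log y ≤ 0.4 * y := sqrt_y_facts h25
  have hLLnn : 0 ≤ Real.log y := Real.log_nonneg (by linarith)
  have hL0 : (0 : ℝ) < ((L : ℕ) : ℝ) := by positivity
  have hsplit : Real.log (2 * ((m * L : ℕ) : ℝ)) = Real.log 2 + y + Real.log ((L : ℕ) : ℝ) := by
    rw [Nat.cast_mul]
    rw [show (2 : ℝ) * ((m : ℝ) * ((L : ℕ) : ℝ)) = 2 * (m : ℝ) * ((L : ℕ) : ℝ) by ring]
    rw [Real.log_mul (by positivity) (by positivity), Real.log_mul (by positivity) (by positivity)]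
  rw [hsplit]
  have hεLL : 0 ≤ ε * Real.log y := mul_nonneg hε.le hLLnn
  have hmul : (1 + ε) * ((y - Real.log 3) + (Real.log y - Real.log 2)) ≤
      (1 + ε) * (Real.log (k : ℝ) + Real.log (Real.log (k : ℝ))) :=
    mul_le_mul_of_nonneg_left (add_le_add hlogk hloglogk) (by linarith)
  nlinarith [hmul, hεLL, hH3, hA]


theorem farey_count_lower_bound (ε : ℝ) (hε : 0 < ε) :
    ∃ m₀ : ℕ, ∀ m : ℕ, m₀ ≤ m → ∀ Q : ℕ, Q = ∏ i ∈ Finset.range m, nthOddPrime i →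
      ((((Finset.Icc 1 ((2 * Q) ^ 2)) ×ˢ (Finset.Ioc Q (2 * Q))).filter
          (fun p : ℕ × ℕ => p.1 ≤ p.2 ^ 2 ∧ Nat.gcd p.1 p.2 = 1 ∧
            |(p.1 : ℝ) / (p.2 : ℝ) ^ 2 - 1 / (Q : ℝ)| ≤ 1 / (Q : ℝ) ^ 3)).card : ℝ) ≥
        (Q : ℝ) ^ (Real.log 2 / ((1 + ε) * Real.log (Real.log Q))) := by
  have hlog : Filter.Tendsto (fun m : ℕ => Real.log m) Filter.atTop Filter.atTop :=
    Real.tendsto_log_atTop.comp tendsto_natCast_atTop_atTop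
  have e1 : ∀ᶠ m : ℕ in Filter.atTop, 25 ≤ Real.log m := hlog.eventually_ge_atTop 25
  have e2 : ∀ᶠ m : ℕ in Filter.atTop,
      2 * Real.log 2 + (1 + ε) * (Real.log 3 + Real.log 2) ≤ ε * Real.log m := by
    have h := hlog.const_mul_atTop hε
    exact h.eventually_ge_atTop _
  have e3 : ∀ᶠ m : ℕ in Filter.atTop, 6 ≤ m := Filter.eventually_ge_atTop 6
  obtain ⟨m₀, hm₀⟩ := Filter.eventually_atTop.mp ((e1.and e2).and e3)
  refine ⟨m₀, fun m hm Q hQ => ?_⟩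
  obtain ⟨⟨h25, hH3⟩, h6⟩ := hm₀ m hm
  have hm1 : 1 ≤ m := by omega
  have hQ3 : 3 ≤ Q := by
    have h0 : 0 ∈ Finset.range m := by simp; omega
    calc 3 ≤ nthOddPrime 0 := three_le_nthOddPrime 0
      _ ≤ ∏ i ∈ Finset.range m, nthOddPrime i :=
        Finset.single_le_prod' (fun i _ => by have := three_le_nthOddPrime i; omega) h0
      _ = Q := hQ.symm
  haveI : NeZero Q := ⟨by omega⟩
  -- cardinality lower bound
  have hcard : 2 ^ m ≤
      (((Finset.Icc 1 ((2 * Q) ^ 2)) ×ˢ (Finset.Ioc Q (2 * Q))).filter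
          (fun p : ℕ × ℕ => p.1 ≤ p.2 ^ 2 ∧ Nat.gcd p.1 p.2 = 1 ∧
            |(p.1 : ℝ) / (p.2 : ℝ) ^ 2 - 1 / (Q : ℝ)| ≤ 1 / (Q : ℝ) ^ 3)).card := by
    have h1 := two_pow_le_card m Q hm1 hQ hQ3
    have h2 : sqc Q = (Finset.univ.filter (fun x : ZMod Q => x ^ 2 = 1)).card := sqc_eq_card Q
    have h3 : sqc Q = 2 ^ m := by rw [hQ]; exact sqc_Q m
    omega
  -- analytic part
  set P := nthOddPrime (m - 1) with hPdef
  have hn1 : 1 ≤ m * (Nat.log 2 m + 1) := by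
    have : 1 ≤ Nat.log 2 m + 1 := by omega
    exact Nat.one_le_iff_ne_zero.2 (by positivity)
  have hP2n : P ≤ 2 * (m * (Nat.log 2 m + 1)) :=
    nthOddPrime_le_of_log m (m * (Nat.log 2 m + 1)) hn1 hm1 (E1_numeric h6 h25)
  have hQpos : (0 : ℝ) < (Q : ℝ) := by
    have : (3 : ℝ) ≤ (Q : ℝ) := by exact_mod_cast hQ3
    linarith
  have hP3 : 3 ≤ P := three_le_nthOddPrime (m - 1)
  have hPpos : (0 : ℝ) < (P : ℝ) := by
    have : (3 : ℝ) ≤ (P : ℝ) := by exact_mod_cast hP3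
    linarith
  -- log Q ≤ m * log P
  have hQP : Real.log Q ≤ (m : ℝ) * Real.log P := by
    have hQle : Q ≤ P ^ m := by
      rw [hQ]
      calc ∏ i ∈ Finset.range m, nthOddPrime i ≤ P ^ (Finset.range m).card := by
            apply Finset.prod_le_pow_card
            intro i hi
            simp only [Finset.mem_range] at hi
            exact nthOddPrime_strictMono.monotone (by omega)
        _ = P ^ m := by rw [Finset.card_range]
    calc Real.log Q ≤ Real.log ((P : ℝ) ^ m) := by
          apply Real.log_le_log hQpos
          exact_mod_cast hQle
      _ = (m : ℝ) * Real.log P := Real.log_pow (P : ℝ) m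
  have hlogP : Real.log P ≤ Real.log (2 * ((m * (Nat.log 2 m + 1) : ℕ) : ℝ)) := by
    apply Real.log_le_log hPpos
    have := (Nat.cast_le (α := ℝ)).2 hP2n
    push_cast at this ⊢
    linarith
  have hE2 := E2_numeric hε h6 h25 hH3
  -- log k + log log k ≤ log log Q
  set k := m / 2 with hkdef
  have hk3 : 3 ≤ k := by omega
  have hkpos : (0 : ℝ) < (k : ℝ) := by
    have : (3 : ℝ) ≤ (k : ℝ) := by exact_mod_cast hk3
    linarith
  have hlogk1 : 1 ≤ Real.log (k : ℝ) := by
    have he : Real.exp 1 ≤ (k : ℝ) := by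
      have h1 : Real.exp 1 < 2.7182818286 := Real.exp_one_lt_d9
      have h2 : (3 : ℝ) ≤ (k : ℝ) := by exact_mod_cast hk3
      linarith
    calc (1 : ℝ) = Real.log (Real.exp 1) := (Real.log_exp 1).symm
      _ ≤ Real.log (k : ℝ) := Real.log_le_log (Real.exp_pos 1) he
  have hkk : k ^ k ≤ Q := by
    rw [hQ]
    calc k ^ k ≤ k ^ (m - k) := Nat.pow_le_pow_right (by omega) (by omega)
      _ ≤ ∏ i ∈ Finset.Ico k m, nthOddPrime i := by
          have h := Finset.pow_card_le_prod (Finset.Ico k m) nthOddPrime k (fun i hi => by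
            simp only [Finset.mem_Ico] at hi
            have := add_three_le_nthOddPrime i
            omega)
          rwa [Nat.card_Ico] at h
      _ ≤ ∏ i ∈ Finset.range m, nthOddPrime i := by
          apply Finset.prod_le_prod_of_subset_of_one_le'
          · intro i hi
            simp only [Finset.mem_Ico] at hi
            simp only [Finset.mem_range]
            omega
          · intro i _ _
            have := three_le_nthOddPrime i
            omega
  have hklogk : (k : ℝ) * Real.log (k : ℝ) ≤ Real.log Q := by
    calc (k : ℝ) * Real.log (k : ℝ) = Real.log ((k : ℝ) ^ k) := (Real.log_pow ((k:ℕ) : ℝ) k).symm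
      _ ≤ Real.log Q := by
          apply Real.log_le_log (by positivity)
          exact_mod_cast hkk
  have hkX : Real.log (k : ℝ) + Real.log (Real.log (k : ℝ)) ≤ Real.log (Real.log Q) := by
    have hmulpos : (0 : ℝ) < (k : ℝ) * Real.log (k : ℝ) := by
      apply mul_pos hkpos
      linarith
    calc Real.log (k : ℝ) + Real.log (Real.log (k : ℝ))
        = Real.log ((k : ℝ) * Real.log (k : ℝ)) :=
          (Real.log_mul (by positivity) (by linarith)).symm
      _ ≤ Real.log (Real.log Q) := Real.log_le_log hmulpos hklogk
  set X := Real.log (Real.log Q) with hXdef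
  have hX0 : 0 < X := by
    have h1 : 0 ≤ Real.log (Real.log (k : ℝ)) := Real.log_nonneg hlogk1
    linarith
  have hfinal : Real.log Q ≤ (1 + ε) * (m : ℝ) * X := by
    have hmnn : (0 : ℝ) ≤ (m : ℝ) := by positivity
    calc Real.log Q ≤ (m : ℝ) * Real.log P := hQP
      _ ≤ (m : ℝ) * ((1 + ε) * (Real.log (k : ℝ) + Real.log (Real.log (k : ℝ)))) := by
          apply mul_le_mul_of_nonneg_left _ hmnn
          exact le_trans hlogP hE2
      _ ≤ (m : ℝ) * ((1 + ε) * X) := by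
          apply mul_le_mul_of_nonneg_left _ hmnn
          exact mul_le_mul_of_nonneg_left hkX (by linarith)
      _ = (1 + ε) * (m : ℝ) * X := by ring
  rw [ge_iff_le]
  have hl2pos : (0 : ℝ) < Real.log 2 := Real.log_pos (by norm_num)
  calc (Q : ℝ) ^ (Real.log 2 / ((1 + ε) * X))
      = Real.exp (Real.log Q * (Real.log 2 / ((1 + ε) * X))) := Real.rpow_def_of_pos hQpos _
    _ ≤ Real.exp ((m : ℝ) * Real.log 2) := by
        apply Real.exp_le_exp.2
        rw [mul_div_assoc', div_le_iff₀ (by positivity)]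
        calc Real.log Q * Real.log 2 ≤ ((1 + ε) * (m : ℝ) * X) * Real.log 2 :=
              mul_le_mul_of_nonneg_right hfinal hl2pos.le
          _ = (m : ℝ) * Real.log 2 * ((1 + ε) * X) := by ring
    _ = (2 : ℝ) ^ m := by
        rw [← Real.log_pow, Real.exp_log (by positivity)]
    _ ≤ _ := by
        have := (Nat.cast_le (α := ℝ)).2 hcard
        push_cast at this
        convert this using 2
end

section
/- For any positive integer Q that is a product of m ≥ 1 distinct odd primes, there exist at least 2^m pairs (a, q) of positive integers with Q < q ≤ 2Q, gcd(a, q) = 1, and |a q⁻² − Q⁻¹| ≤ Q⁻³ (as real numbers). -/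
theorem many_close_pairs (m : ℕ) (hm : 1 ≤ m) (q : Fin m → ℕ)
    (hinj : Function.Injective q) (hprime : ∀ i, (q i).Prime) (hodd : ∀ i, q i ≠ 2)
    (Q : ℕ) (hQ : Q = ∏ i, q i) :
    ∃ S : Finset (ℕ × ℕ), 2 ^ m ≤ S.card ∧
      ∀ p ∈ S, 0 < p.1 ∧ 0 < p.2 ∧ Q < p.2 ∧ p.2 ≤ 2 * Q ∧ Nat.gcd p.1 p.2 = 1 ∧
        |(p.1 : ℝ) * ((p.2 : ℝ) ^ 2)⁻¹ - ((Q : ℝ))⁻¹| ≤ ((Q : ℝ) ^ 3)⁻¹ := by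
  subst hQ
  set Q := ∏ i, q i with hQdef
  -- basic facts
  have hQ1 : 1 < Q := by
    obtain ⟨i0⟩ : Nonempty (Fin m) := ⟨⟨0, hm⟩⟩
    have h1 : q i0 ≤ Q := Finset.single_le_prod' (fun i _ => (hprime i).one_lt.le) (Finset.mem_univ i0)
    exact lt_of_lt_of_le (hprime i0).one_lt h1
  haveI : NeZero Q := ⟨by omega⟩
  have hco : Pairwise (Function.onFun Nat.Coprime q) := by
    intro i j hij
    exact (Nat.coprime_primes (hprime i) (hprime j)).mpr (fun h => hij (hinj h))
  let e := ZMod.prodEquivPi q hco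
  -- the element of ZMod Q for each sign choice
  let x : (Fin m → Bool) → ZMod Q := fun ε => e.symm (fun i => if ε i then 1 else -1)
  have hx2 : ∀ ε, (x ε) ^ 2 = 1 := by
    intro ε
    apply e.injective
    rw [map_pow, map_one]
    simp only [x, RingEquiv.apply_symm_apply]
    funext i
    by_cases h : ε i <;> simp [h]
  have hxinj : Function.Injective x := by
    intro ε ε' h
    funext i
    have := e.symm.injective.eq_iff.mp (by exact h)
    have hi := congrFun this i
    by_cases h1 : ε i <;> by_cases h2 : ε' i <;> simp_all
    · exfalso
      haveI : Fact (q i).Prime := ⟨hprime i⟩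
      have h0 : ((2 : ℕ) : ZMod (q i)) = 0 := by push_cast; linear_combination hi
      rw [ZMod.natCast_eq_zero_iff] at h0
      exact hodd i ((Nat.prime_dvd_prime_iff_eq (hprime i) Nat.prime_two).mp h0)
    · exfalso
      haveI : Fact (q i).Prime := ⟨hprime i⟩
      have h0 : ((2 : ℕ) : ZMod (q i)) = 0 := by push_cast; linear_combination -hi
      rw [ZMod.natCast_eq_zero_iff] at h0
      exact hodd i ((Nat.prime_dvd_prime_iff_eq (hprime i) Nat.prime_two).mp h0)
  -- the q value
  let n : (Fin m → Bool) → ℕ := fun ε => (x ε).val + Q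
  haveI : Fact (1 < Q) := ⟨hQ1⟩
  have hxne : ∀ ε, x ε ≠ 0 := by
    intro ε h
    have h2 := hx2 ε
    rw [h, zero_pow (by norm_num)] at h2
    exact zero_ne_one h2
  have hxval : ∀ ε, 0 < (x ε).val := by
    intro ε
    exact Nat.pos_of_ne_zero (fun h => hxne ε ((ZMod.val_eq_zero _).mp h))
  have hnQ : ∀ ε, Q < n ε := fun ε => by
    have := hxval ε; simp only [n]; omega
  have hn2Q : ∀ ε, n ε ≤ 2 * Q := fun ε => by
    have := ZMod.val_lt (x ε); simp only [n]; omega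
  have hdvd : ∀ ε, Q ∣ (n ε) ^ 2 - 1 := by
    intro ε
    have hcast : ((n ε : ℕ) : ZMod Q) = x ε := by
      simp only [n]
      push_cast
      simp [ZMod.natCast_val, ZMod.cast_id]
    have h2 : (((n ε) ^ 2 : ℕ) : ZMod Q) = ((1 : ℕ) : ZMod Q) := by
      push_cast
      rw [hcast, hx2 ε]
    have := (ZMod.natCast_eq_natCast_iff _ _ _).mp h2
    have h1 : 1 ≤ (n ε) ^ 2 := Nat.one_le_pow _ _ (by have := hnQ ε; omega)
    exact (Nat.modEq_iff_dvd' h1).mp this.symm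
  let a : (Fin m → Bool) → ℕ := fun ε => ((n ε) ^ 2 - 1) / Q
  have haQ : ∀ ε, a ε * Q = (n ε) ^ 2 - 1 := fun ε => Nat.div_mul_cancel (hdvd ε)
  have hapos : ∀ ε, 0 < a ε := by
    intro ε
    rcases Nat.eq_zero_or_pos (a ε) with h | h
    · exfalso
      have hh := haQ ε
      rw [h, zero_mul] at hh
      have hn := hnQ ε
      have h2 : 2 ≤ n ε := by omega
      have h4 : 4 ≤ n ε ^ 2 := by nlinarith
      omega
    · exact h
  have hgcd : ∀ ε, Nat.gcd (a ε) (n ε) = 1 := by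
    intro ε
    have h := haQ ε
    have h1 : a ε * Q + 1 = n ε ^ 2 := by
      have : 1 ≤ n ε ^ 2 := Nat.one_le_pow _ _ (by have := hnQ ε; omega)
      omega
    have hd1 : Nat.gcd (a ε) (n ε) ∣ a ε * Q := Dvd.dvd.mul_right (Nat.gcd_dvd_left _ _) _
    have hd2 : Nat.gcd (a ε) (n ε) ∣ n ε ^ 2 := Dvd.dvd.pow (Nat.gcd_dvd_right _ _) (by norm_num)
    have : Nat.gcd (a ε) (n ε) ∣ 1 := by
      have := Nat.dvd_sub hd2 hd1
      rwa [← h1, Nat.add_sub_cancel_left] at this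
    exact Nat.eq_one_of_dvd_one this
  -- the finset
  let f : (Fin m → Bool) → ℕ × ℕ := fun ε => (a ε, n ε)
  have hfinj : Function.Injective f := by
    intro ε ε' h
    have h2 : n ε = n ε' := congrArg Prod.snd h
    have : (x ε).val = (x ε').val := by simp only [n] at h2; omega
    exact hxinj (ZMod.val_injective Q this)
  refine ⟨Finset.image f Finset.univ, ?_, ?_⟩
  · rw [Finset.card_image_of_injective _ hfinj, Finset.card_univ]
    simp
  · intro p hp
    simp only [Finset.mem_image, Finset.mem_univ, true_and] at hp
    obtain ⟨ε, rfl⟩ := hp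
    simp only [f]
    refine ⟨hapos ε, by have := hnQ ε; omega, hnQ ε, hn2Q ε, hgcd ε, ?_⟩
    -- real estimate
    have hQR : (0 : ℝ) < Q := by exact_mod_cast Nat.pos_of_ne_zero (by omega)
    have hnR : (Q : ℝ) < n ε := by exact_mod_cast hnQ ε
    have hnpos : (0 : ℝ) < n ε := lt_trans hQR hnR
    have key : (a ε : ℝ) * Q = (n ε : ℝ) ^ 2 - 1 := by
      have h := haQ ε
      have h1 : 1 ≤ n ε ^ 2 := Nat.one_le_pow _ _ (by have := hnQ ε; omega)
      have := congrArg (Nat.cast : ℕ → ℝ) h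
      push_cast [Nat.cast_sub h1] at this
      linarith [this]
    have hval : (a ε : ℝ) * ((n ε : ℝ) ^ 2)⁻¹ - ((Q : ℝ))⁻¹ = -(((Q : ℝ) * (n ε : ℝ) ^ 2)⁻¹) := by
      field_simp
      linear_combination key
    rw [hval, abs_neg, abs_inv, abs_of_pos (by positivity)]
    rw [inv_le_inv₀ (by positivity) (by positivity)]
    have : (Q : ℝ) ^ 2 ≤ (n ε : ℝ) ^ 2 := by nlinarith
    nlinarith
end
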